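/- For every constant d > 1 and sufficiently large n, the number of integers z in [2^n, 2^(n+1)) computable by a straight-line program of length at most n/(3d·log₂ n) is at most 2^(n/d); hence at least 2^n·(1 − 2^(−(1−1/d)n)) integers in this interval require straight-line programs of length greater than n/(3d·log₂ n). -/

import Mathlib

/-- `Computes l z` : there is a straight-line program of length `l` over
`{+, −, ×}`, starting from the constant `1`, whose final register equals `z`. -/
def Computes (l : ℕ) (z : ℤ) : Prop :=
  ∃ a : ℕ → ℤ, a 0 = 1 ∧
    (∀ i, 1 ≤ i → i ≤ l → ∃ j k, j < i ∧ k < i ∧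
      (a i = a j + a k ∨ a i = a j * a k ∨ a i = a j - a k)) ∧
    a l = z

namespace AH
noncomputable def op3 : Fin 3 → ℤ → ℤ → ℤ := fun o x y =>
  if o = 0 then x + y else if o = 1 then x * y else x - y

noncomputable def eval (c : ℕ → ℕ × ℕ × Fin 3) : ℕ → ℤ
  | 0 => 1
  | (i+1) =>
      op3 (c (i+1)).2.2 (eval c (min (c (i+1)).1 i)) (eval c (min (c (i+1)).2.1 i))
decreasing_by
  · exact Nat.lt_succ_of_le (min_le_right _ _)
  · exact Nat.lt_succ_of_le (min_le_right _ _)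

noncomputable def expand (L : ℕ) (g : Fin L → Fin L × Fin L × Fin 3) : ℕ → ℕ × ℕ × Fin 3 :=
  fun i => if h : i - 1 < L then
    (((g ⟨i-1, h⟩).1 : ℕ), ((g ⟨i-1, h⟩).2.1 : ℕ), (g ⟨i-1, h⟩).2.2) else (0, 0, 0)

theorem pad {l L : ℕ} {z : ℤ} (h : Computes l z) (hlL : l ≤ L) : Computes L z := by
  obtain ⟨a, h0, hstep, hl⟩ := h
  refine ⟨fun i => if i ≤ l then a i else a l, by simp [h0], ?_, ?_⟩
  · intro i h1 hiL
    by_cases hil : i ≤ l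
    · obtain ⟨j, k, hj, hk, hop⟩ := hstep i h1 hil
      exact ⟨j, k, hj, hk, by
        simp only [if_pos hil, if_pos (le_trans (le_of_lt hj) hil),
          if_pos (le_trans (le_of_lt hk) hil)]
        exact hop⟩
    · refine ⟨l, 0, by omega, by omega, ?_⟩
      simp only [if_neg hil, if_pos (le_refl l), if_pos (Nat.zero_le l), h0]
      exact Or.inr (Or.inl (by ring))
  · by_cases hLl : L ≤ l
    · have : L = l := le_antisymm hLl hlL
      simp [this, hl]
    · simp [hLl, hl]

theorem computes_mem_range {L : ℕ} {z : ℤ} (h : Computes L z) :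
    ∃ g : Fin L → Fin L × Fin L × Fin 3, eval (expand L g) L = z := by
  classical
  obtain ⟨a, h0, hstep, hl⟩ := h
  choose j k hj hk hop using hstep
  have p1 : ∀ i : Fin L, 1 ≤ (i : ℕ) + 1 := fun i => Nat.succ_le_succ (Nat.zero_le _)
  have p2 : ∀ i : Fin L, (i : ℕ) + 1 ≤ L := fun i => i.isLt
  refine ⟨fun i =>
    (⟨j ((i : ℕ)+1) (p1 i) (p2 i), lt_of_lt_of_le (hj _ _ _) (p2 i)⟩,
     ⟨k ((i : ℕ)+1) (p1 i) (p2 i), lt_of_lt_of_le (hk _ _ _) (p2 i)⟩,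
     if a ((i : ℕ)+1) = a (j ((i : ℕ)+1) (p1 i) (p2 i)) + a (k ((i : ℕ)+1) (p1 i) (p2 i)) then 0
     else if a ((i : ℕ)+1) = a (j ((i : ℕ)+1) (p1 i) (p2 i)) * a (k ((i : ℕ)+1) (p1 i) (p2 i)) then 1
     else 2), ?_⟩
  set g : Fin L → Fin L × Fin L × Fin 3 := fun i =>
    (⟨j ((i : ℕ)+1) (p1 i) (p2 i), lt_of_lt_of_le (hj _ _ _) (p2 i)⟩,
     ⟨k ((i : ℕ)+1) (p1 i) (p2 i), lt_of_lt_of_le (hk _ _ _) (p2 i)⟩,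
     if a ((i : ℕ)+1) = a (j ((i : ℕ)+1) (p1 i) (p2 i)) + a (k ((i : ℕ)+1) (p1 i) (p2 i)) then 0
     else if a ((i : ℕ)+1) = a (j ((i : ℕ)+1) (p1 i) (p2 i)) * a (k ((i : ℕ)+1) (p1 i) (p2 i)) then 1
     else 2) with hgdef
  suffices key : ∀ i, i ≤ L → eval (expand L g) i = a i by
    rw [key L le_rfl, hl]
  intro i
  induction i using Nat.strong_induction_on with
  | _ i IH =>
    match i with
    | 0 => intro _; rw [eval, h0]
    | (m+1) =>
      intro hm1
      have hmL : m < L := hm1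
      have hexp : expand L g (m+1) =
          (((g ⟨m, hmL⟩).1 : ℕ), ((g ⟨m, hmL⟩).2.1 : ℕ), (g ⟨m, hmL⟩).2.2) := by
        simp only [expand, Nat.add_sub_cancel, dif_pos hmL]
      rw [eval, hexp]
      set jv := j (m+1) (p1 ⟨m, hmL⟩) (p2 ⟨m, hmL⟩) with hjv
      set kv := k (m+1) (p1 ⟨m, hmL⟩) (p2 ⟨m, hmL⟩) with hkv
      have hg1 : ((g ⟨m, hmL⟩).1 : ℕ) = jv := rfl
      have hg2 : ((g ⟨m, hmL⟩).2.1 : ℕ) = kv := rfl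
      have hjm : jv < m + 1 := hj _ _ _
      have hkm : kv < m + 1 := hk _ _ _
      simp only [hg1, hg2, Nat.min_eq_left (Nat.lt_succ_iff.mp hjm),
        Nat.min_eq_left (Nat.lt_succ_iff.mp hkm)]
      rw [IH jv hjm (by omega), IH kv hkm (by omega)]
      have hg3 : (g ⟨m, hmL⟩).2.2 =
          (if a (m+1) = a jv + a kv then (0 : Fin 3)
           else if a (m+1) = a jv * a kv then 1 else 2) := rfl
      rw [hg3]
      split_ifs with h1 h2
      · rw [show op3 0 (a jv) (a kv) = a jv + a kv from rfl]
        exact h1.symm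
      · rw [show op3 1 (a jv) (a kv) = a jv * a kv from rfl]
        exact h2.symm
      · rcases hop (m+1) (p1 ⟨m, hmL⟩) (p2 ⟨m, hmL⟩) with hc | hc | hc
        · exact absurd hc h1
        · exact absurd hc h2
        · rw [show op3 2 (a jv) (a kv) = a jv - a kv from rfl]
          exact hc.symm

theorem range_lemma (L : ℕ) : ∃ f : (Fin L → Fin L × Fin L × Fin 3) → ℤ,
    ∀ z, Computes L z → ∃ g, f g = z :=
  ⟨fun g => eval (expand L g) L, fun _ h => computes_mem_range h⟩
end AH


theorem almost_all_hard (d : ℝ) (hd : 1 < d) :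
    ∃ N : ℕ, ∀ n : ℕ, N ≤ n →
      (({z : ℤ | 2 ^ n ≤ z ∧ z < 2 ^ (n + 1) ∧
          ∃ l : ℕ, (l : ℝ) ≤ n / (3 * d * Real.logb 2 n) ∧ Computes l z}.ncard : ℝ)
        ≤ 2 ^ ((n : ℝ) / d)) ∧
      ((2 ^ n : ℝ) * (1 - 2 ^ (-(1 - 1 / d) * n)) ≤
        ({z : ℤ | 2 ^ n ≤ z ∧ z < 2 ^ (n + 1) ∧
          ∀ l : ℕ, Computes l z → (n : ℝ) / (3 * d * Real.logb 2 n) < l}.ncard : ℝ)) := by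
  refine ⟨3, fun n hn => ?_⟩
  have hd0 : (0:ℝ) < d := lt_trans one_pos hd
  have hn3 : (3:ℝ) ≤ (n:ℝ) := by exact_mod_cast hn
  have hn0 : (0:ℝ) < n := by linarith
  have hlog : 1 ≤ Real.logb 2 n := by
    rw [show (1:ℝ) = Real.logb 2 2 by simp]
    exact Real.logb_le_logb_of_le (by norm_num) (by norm_num) (by linarith)
  have hden : 0 < 3 * d * Real.logb 2 n := by nlinarith
  set B : ℝ := (n:ℝ) / (3 * d * Real.logb 2 n) with hB
  set L : ℕ := ⌊B⌋₊ with hLdef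
  have hB0 : 0 ≤ B := div_nonneg hn0.le hden.le
  have hLB : (L:ℝ) ≤ B := Nat.floor_le hB0
  have hBn : B ≤ (n:ℝ) := by
    rw [hB, div_le_iff₀ hden]
    have h1 : 1 ≤ 3 * d * Real.logb 2 n := by nlinarith
    nlinarith [mul_le_mul_of_nonneg_left h1 hn0.le]
  have hLn : (L:ℝ) ≤ (n:ℝ) := hLB.trans hBn
  -- the easy set
  set S : Set ℤ := {z : ℤ | 2 ^ n ≤ z ∧ z < 2 ^ (n + 1) ∧
      ∃ l : ℕ, (l : ℝ) ≤ B ∧ Computes l z} with hSdef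
  obtain ⟨f, hf⟩ := AH.range_lemma L
  have hsub : S ⊆ Set.range f := by
    rintro z ⟨_, _, l, hlB, hcomp⟩
    obtain ⟨g, hg⟩ := hf z (AH.pad hcomp (Nat.le_floor hlB))
    exact ⟨g, hg⟩
  have hSfin : S.Finite := (Set.finite_range f).subset hsub
  have hcount : S.ncard ≤ (L * L * 3) ^ L := by
    calc S.ncard ≤ (Set.range f).ncard :=
          Set.ncard_le_ncard hsub (Set.finite_range f)
      _ ≤ (Set.univ : Set (Fin L → Fin L × Fin L × Fin 3)).ncard := by
          rw [← Set.image_univ]; exact Set.ncard_image_le Set.finite_univ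
      _ = (L * L * 3) ^ L := by
          rw [Set.ncard_univ, Nat.card_eq_fintype_card]
          simp [Fintype.card_fun, mul_assoc]
  have h2n : (2:ℝ) ^ (Real.logb 2 n) = n := Real.rpow_logb two_pos (by norm_num) hn0
  have hpart1 : (S.ncard : ℝ) ≤ 2 ^ ((n : ℝ) / d) := by
    calc (S.ncard : ℝ) ≤ (((L * L * 3) ^ L : ℕ) : ℝ) := by exact_mod_cast hcount
      _ ≤ ((n:ℝ) ^ 3) ^ L := by
          push_cast
          apply pow_le_pow_left₀ (by positivity)
          have h1 : (L:ℝ) * L ≤ (n:ℝ) * n :=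
            mul_le_mul hLn hLn (Nat.cast_nonneg L) hn0.le
          have h2 : (L:ℝ) * L * 3 ≤ (n:ℝ) * n * 3 := by linarith
          have h3 : (n:ℝ) * n * 3 ≤ (n:ℝ) * n * n := by
            nlinarith [mul_nonneg hn0.le hn0.le]
          calc (L:ℝ) * L * 3 ≤ (n:ℝ) * n * n := by linarith
            _ = (n:ℝ) ^ 3 := by ring
      _ = (n:ℝ) ^ (3 * L) := (pow_mul _ 3 L).symm
      _ = (2:ℝ) ^ (Real.logb 2 n * ((3 * L : ℕ) : ℝ)) := by
          rw [Real.rpow_mul (le_of_lt two_pos), h2n, Real.rpow_natCast]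
      _ ≤ (2:ℝ) ^ ((n:ℝ) / d) := by
          apply Real.rpow_le_rpow_of_exponent_le one_le_two
          have hmul : (L:ℝ) * (3 * d * Real.logb 2 n) ≤ n := by
            rw [← le_div_iff₀ hden]; exact hLB
          rw [le_div_iff₀ hd0]
          push_cast
          nlinarith
  refine ⟨hpart1, ?_⟩
  -- second part
  set I : Set ℤ := Set.Ico ((2:ℤ) ^ n) (2 ^ (n + 1)) with hIdef
  have hIfin : I.Finite := Set.finite_Ico _ _
  have hIcard : I.ncard = 2 ^ n := by
    rw [hIdef, ← Finset.coe_Ico, Set.ncard_coe_finset, Int.card_Ico]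
    have h2 : (2:ℤ) ^ (n+1) - 2 ^ n = ((2 ^ n : ℕ) : ℤ) := by push_cast; ring
    rw [h2, Int.toNat_natCast]
  have hSI : S ⊆ I := fun z hz => Set.mem_Ico.mpr ⟨hz.1, hz.2.1⟩
  have hHd : {z : ℤ | 2 ^ n ≤ z ∧ z < 2 ^ (n + 1) ∧
      ∀ l : ℕ, Computes l z → B < l} = I \ S := by
    ext z
    simp only [hSdef, hIdef, Set.mem_setOf_eq, Set.mem_diff, Set.mem_Ico]
    constructor
    · rintro ⟨h1, h2, h3⟩
      refine ⟨⟨h1, h2⟩, ?_⟩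
      rintro ⟨_, _, l, hl, hc⟩
      exact absurd hl (not_le.mpr (h3 l hc))
    · rintro ⟨⟨h1, h2⟩, hns⟩
      refine ⟨h1, h2, fun l hc => ?_⟩
      by_contra hle
      exact hns ⟨h1, h2, l, not_lt.mp hle, hc⟩
  rw [hHd, Set.ncard_diff hSI hSfin]
  have hle : S.ncard ≤ I.ncard := Set.ncard_le_ncard hSI hIfin
  rw [Nat.cast_sub hle, hIcard]
  have hid : (2:ℝ) ^ n * (2:ℝ) ^ (-(1 - 1 / d) * (n:ℝ)) = 2 ^ ((n : ℝ) / d) := by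
    rw [← Real.rpow_natCast 2 n, ← Real.rpow_add two_pos]
    congr 1
    field_simp
    ring
  push_cast
  nlinarith [hpart1, hid]
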